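/- Let n ≥ 1, let ℏ > 0, t > 0, and x, y ∈ ℝⁿ, and set s = (1/ℏ)·(1 − e^{−tℏ})/(1 + e^{−tℏ}). Then the rescaled Mehler expression equals its reparametrized form: π^{−n/2} (1 − e^{−2ℏt})^{−n/2} · exp( −[ ((|x|² + |y|²)/2)(1 + e^{−2ℏt}) − 2 e^{−tℏ} x·y ] / (ℏ(1 − e^{−2ℏt})) ) = (4πℏ)^{−n/2} s^{−n/2} (1 + sℏ)^n · exp( −|x − y|²/(4ℏ²s) − s|x + y|²/4 ). -/

import Mathlib

open Real

theorem mehler_reparametrization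
    (n : ℕ) (hn : 1 ≤ n) (ℏ t : ℝ) (hℏ : 0 < ℏ) (ht : 0 < t)
    (x y : EuclideanSpace ℝ (Fin n))
    (s : ℝ) (hs : s = (1 / ℏ) * ((1 - Real.exp (-(t * ℏ))) / (1 + Real.exp (-(t * ℏ))))) :
    Real.pi ^ (-(n : ℝ) / 2) * (1 - Real.exp (-(2 * ℏ * t))) ^ (-(n : ℝ) / 2) *
      Real.exp (-(((‖x‖ ^ 2 + ‖y‖ ^ 2) / 2) * (1 + Real.exp (-(2 * ℏ * t)))
          - 2 * Real.exp (-(t * ℏ)) * (inner ℝ x y : ℝ)) / (ℏ * (1 - Real.exp (-(2 * ℏ * t)))))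
    = (4 * Real.pi * ℏ) ^ (-(n : ℝ) / 2) * s ^ (-(n : ℝ) / 2) * (1 + s * ℏ) ^ n *
      Real.exp (-(‖x - y‖ ^ 2) / (4 * ℏ ^ 2 * s) - s * ‖x + y‖ ^ 2 / 4) := by
  set E := Real.exp (-(t * ℏ)) with hE_def
  have hEpos : 0 < E := Real.exp_pos _
  have hElt : E < 1 := by
    rw [hE_def]
    exact Real.exp_lt_one_iff.mpr (by nlinarith)
  have h1mE : 0 < 1 - E := by linarith
  have h1pE : 0 < 1 + E := by linarith
  have h2 : Real.exp (-(2 * ℏ * t)) = E ^ 2 := by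
    rw [hE_def, ← Real.exp_nat_mul]
    ring_nf
  have h1mE2 : 0 < 1 - E ^ 2 := by nlinarith
  have hs0 : 0 < s := by
    rw [hs]; positivity
  have hsh : s * ℏ = (1 - E) / (1 + E) := by
    rw [hs]; field_simp
  have h1sh : 1 + s * ℏ = 2 / (1 + E) := by
    rw [hsh]; field_simp; ring
  have h1sh0 : 0 < 1 + s * ℏ := by rw [h1sh]; positivity
  have key : 4 * Real.pi * ℏ * s * ((1 + s * ℏ) ^ 2)⁻¹ = Real.pi * (1 - E ^ 2) := by
    have hsval : s = (1 - E) / (ℏ * (1 + E)) := by rw [hs]; field_simp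
    rw [h1sh, hsval]
    field_simp
    ring
  -- prefactor
  have pref : (4 * Real.pi * ℏ) ^ (-(n : ℝ) / 2) * s ^ (-(n : ℝ) / 2) * (1 + s * ℏ) ^ n
      = Real.pi ^ (-(n : ℝ) / 2) * (1 - E ^ 2) ^ (-(n : ℝ) / 2) := by
    have hpow : ((1 + s * ℏ) : ℝ) ^ n = (((1 + s * ℏ) ^ 2)⁻¹) ^ (-(n : ℝ) / 2) := by
      rw [← Real.rpow_natCast (1 + s * ℏ) n, Real.inv_rpow (by positivity),
        ← Real.rpow_natCast (1 + s * ℏ) 2, ← Real.rpow_mul (le_of_lt h1sh0),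
        ← Real.rpow_neg (le_of_lt h1sh0)]
      congr 1
      push_cast
      ring
    rw [hpow, ← Real.mul_rpow (by positivity) (le_of_lt hs0),
      ← Real.mul_rpow (by positivity) (by positivity), key,
      Real.mul_rpow (le_of_lt Real.pi_pos) (le_of_lt h1mE2)]
  -- exponent
  have hxy : ‖x - y‖ ^ 2 = ‖x‖ ^ 2 - 2 * (inner ℝ x y : ℝ) + ‖y‖ ^ 2 := norm_sub_sq_real x y
  have hxy' : ‖x + y‖ ^ 2 = ‖x‖ ^ 2 + 2 * (inner ℝ x y : ℝ) + ‖y‖ ^ 2 := norm_add_sq_real x y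
  have hexp : -(((‖x‖ ^ 2 + ‖y‖ ^ 2) / 2) * (1 + E ^ 2)
          - 2 * E * (inner ℝ x y : ℝ)) / (ℏ * (1 - E ^ 2))
      = -(‖x - y‖ ^ 2) / (4 * ℏ ^ 2 * s) - s * ‖x + y‖ ^ 2 / 4 := by
    have hsval : s = (1 - E) / (ℏ * (1 + E)) := by rw [hs]; field_simp
    rw [hxy, hxy', hsval]
    have h1 : (1 : ℝ) - E ^ 2 = (1 - E) * (1 + E) := by ring
    rw [h1]
    field_simp
    ring
  rw [h2, hexp, pref]
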